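/- For every squarefree positive integer d, the number of triples (a, b, c) ∈ (ℤ/dℤ)³ satisfying a·c = b² + b equals d · ∏_{p prime, p ∣ d} (p + 1). -/

import Mathlib

open Finset

/-- Number of pairs with given product in a finite field. -/
lemma card_pairs_mul_eq {F : Type*} [Field F] [Fintype F] [DecidableEq F] (k : F) :
    Nat.card {ac : F × F // ac.1 * ac.2 = k} =
      if k = 0 then 2 * Fintype.card F - 1 else Fintype.card F - 1 := by
  split_ifs with hk
  · subst hk
    have hcompl : Nat.card {ac : F × F // ¬ ac.1 * ac.2 = 0}
        = (Fintype.card F - 1) * (Fintype.card F - 1) := by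
      have e1 : {ac : F × F // ¬ ac.1 * ac.2 = 0} ≃ {a : F // a ≠ 0} × {a : F // a ≠ 0} := by
        refine (Equiv.subtypeEquiv (Equiv.refl _) ?_).trans (Equiv.subtypeProdEquivProd)
        intro ac
        simp [mul_ne_zero_iff]
      rw [Nat.card_congr e1, Nat.card_prod]
      have : Nat.card {a : F // a ≠ 0} = Fintype.card F - 1 := by
        rw [Nat.card_congr (unitsEquivNeZero (G₀ := F)).symm, Nat.card_eq_fintype_card,
          Fintype.card_units]
      rw [this]
    have htot : Nat.card {ac : F × F // ac.1 * ac.2 = 0}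
        + Nat.card {ac : F × F // ¬ ac.1 * ac.2 = 0} = Fintype.card F * Fintype.card F := by
      rw [Nat.card_eq_fintype_card, Nat.card_eq_fintype_card,
        Fintype.card_subtype, Fintype.card_subtype]
      rw [Finset.card_filter_add_card_filter_not]
      simp [Fintype.card_prod]
    rw [hcompl] at htot
    have hq : 1 ≤ Fintype.card F := Fintype.card_pos
    obtain ⟨r, hr⟩ : ∃ r, Fintype.card F = r + 1 := ⟨Fintype.card F - 1, by omega⟩
    rw [hr] at htot ⊢
    have h1 : (r + 1) * (r + 1) = r * r + 2 * r + 1 := by ring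
    simp only [Nat.add_sub_cancel] at htot
    omega
  · have e : {ac : F × F // ac.1 * ac.2 = k} ≃ {a : F // a ≠ 0} := by
      refine ⟨fun x => ⟨x.1.1, fun h0 => hk (by rw [← x.2, h0, zero_mul])⟩,
        fun a => ⟨(a.1, a.1⁻¹ * k), by rw [← mul_assoc, mul_inv_cancel₀ a.2, one_mul]⟩, ?_, ?_⟩
      · rintro ⟨⟨a, c⟩, h⟩
        have ha : a ≠ 0 := fun h0 => hk (by rw [← h, h0, zero_mul])
        apply Subtype.ext
        have hc : a⁻¹ * k = c := by rw [← h, ← mul_assoc, inv_mul_cancel₀ ha, one_mul]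
        simp [hc]
      · rintro ⟨a, ha⟩; rfl
    rw [Nat.card_congr e, Nat.card_congr (unitsEquivNeZero (G₀ := F)).symm,
      Nat.card_eq_fintype_card, Fintype.card_units]

/-- The prime case. -/
lemma count_solutions_prime (p : ℕ) (hp : p.Prime) :
    Nat.card {v : ZMod p × ZMod p × ZMod p // v.1 * v.2.2 = v.2.1 ^ 2 + v.2.1}
      = p * (p + 1) := by
  haveI : Fact p.Prime := ⟨hp⟩
  -- reorganize as a sigma over b
  have e : {v : ZMod p × ZMod p × ZMod p // v.1 * v.2.2 = v.2.1 ^ 2 + v.2.1}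
      ≃ Σ b : ZMod p, {ac : ZMod p × ZMod p // ac.1 * ac.2 = b ^ 2 + b} := by
    refine ⟨fun v => ⟨v.1.2.1, ⟨(v.1.1, v.1.2.2), v.2⟩⟩,
      fun s => ⟨(s.2.1.1, s.1, s.2.1.2), s.2.2⟩, ?_, ?_⟩
    · rintro ⟨⟨a, b, c⟩, h⟩; rfl
    · rintro ⟨b, ⟨⟨a, c⟩, h⟩⟩; rfl
  rw [Nat.card_congr e, Nat.card_eq_fintype_card, Fintype.card_sigma]
  have hcard : ∀ b : ZMod p, Fintype.card {ac : ZMod p × ZMod p // ac.1 * ac.2 = b ^ 2 + b}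
      = if b ^ 2 + b = 0 then 2 * p - 1 else p - 1 := by
    intro b
    rw [← Nat.card_eq_fintype_card, card_pairs_mul_eq, ZMod.card]
  simp only [hcard]
  rw [Finset.sum_ite, Finset.sum_const, Finset.sum_const, smul_eq_mul, smul_eq_mul]
  have hset : (univ.filter fun b : ZMod p => b ^ 2 + b = 0) = {0, -1} := by
    ext b
    simp only [mem_filter, mem_univ, true_and, mem_insert, mem_singleton]
    constructor
    · intro h
      have : b * (b + 1) = 0 := by rw [← h]; ring
      rcases mul_eq_zero.mp this with h1 | h1
      · exact Or.inl h1
      · exact Or.inr (by linear_combination h1)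
    · rintro (rfl | rfl) <;> ring
  have hcard2 : (univ.filter fun b : ZMod p => b ^ 2 + b = 0).card = 2 := by
    rw [hset]
    rw [Finset.card_insert_of_notMem (by simp), Finset.card_singleton]
  have hcard3 : (univ.filter fun b : ZMod p => ¬ b ^ 2 + b = 0).card = p - 2 := by
    have := Finset.card_filter_add_card_filter_not
      (s := (univ : Finset (ZMod p))) (p := fun b : ZMod p => b ^ 2 + b = 0)
    rw [hcard2] at this
    rw [Finset.card_univ, ZMod.card] at this
    omega
  rw [hcard2, hcard3]
  have h2 : 2 ≤ p := hp.two_le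
  obtain ⟨r, rfl⟩ : ∃ r, p = r + 2 := ⟨p - 2, by omega⟩
  have e1 : 2 * (r + 2) - 1 = 2 * r + 3 := by omega
  have e2 : r + 2 - 1 = r + 1 := by omega
  have e3 : r + 2 - 2 = r := by omega
  rw [e1, e2, e3]
  ring

/-- Multiplicativity via CRT. -/
lemma count_solutions_mul (m n : ℕ) (hm : 0 < m) (hn : 0 < n) (h : Nat.Coprime m n) :
    Nat.card {v : ZMod (m * n) × ZMod (m * n) × ZMod (m * n) //
        v.1 * v.2.2 = v.2.1 ^ 2 + v.2.1}
      = Nat.card {v : ZMod m × ZMod m × ZMod m // v.1 * v.2.2 = v.2.1 ^ 2 + v.2.1}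
        * Nat.card {v : ZMod n × ZMod n × ZMod n // v.1 * v.2.2 = v.2.1 ^ 2 + v.2.1} := by
  have e := ZMod.chineseRemainder h
  have E : {v : ZMod (m * n) × ZMod (m * n) × ZMod (m * n) //
        v.1 * v.2.2 = v.2.1 ^ 2 + v.2.1}
      ≃ {v : ZMod m × ZMod m × ZMod m // v.1 * v.2.2 = v.2.1 ^ 2 + v.2.1}
        × {v : ZMod n × ZMod n × ZMod n // v.1 * v.2.2 = v.2.1 ^ 2 + v.2.1} := by
    refine ⟨fun x => (⟨((e x.1.1).1, (e x.1.2.1).1, (e x.1.2.2).1), ?_⟩,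
        ⟨((e x.1.1).2, (e x.1.2.1).2, (e x.1.2.2).2), ?_⟩),
      fun y => ⟨(e.symm (y.1.1.1, y.2.1.1), e.symm (y.1.1.2.1, y.2.1.2.1),
        e.symm (y.1.1.2.2, y.2.1.2.2)), ?_⟩, ?_, ?_⟩
    · have := congrArg (fun z => (e z).1) x.2
      simpa using this
    · have := congrArg (fun z => (e z).2) x.2
      simpa using this
    · obtain ⟨⟨⟨a1, b1, c1⟩, h1⟩, ⟨⟨a2, b2, c2⟩, h2⟩⟩ := y
      simp only at h1 h2 ⊢
      have key : (a1, a2) * (c1, c2) = (b1, b2) ^ 2 + (b1, b2) := by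
        rw [Prod.ext_iff]
        constructor <;> simpa
      calc e.symm (a1, a2) * e.symm (c1, c2) = e.symm ((a1, a2) * (c1, c2)) :=
            (map_mul _ _ _).symm
        _ = e.symm ((b1, b2) ^ 2 + (b1, b2)) := by rw [key]
        _ = e.symm (b1, b2) ^ 2 + e.symm (b1, b2) := by rw [map_add, map_pow]
    · rintro ⟨⟨a, b, c⟩, hx⟩
      apply Subtype.ext
      simp
    · rintro ⟨⟨⟨a1, b1, c1⟩, h1⟩, ⟨⟨a2, b2, c2⟩, h2⟩⟩
      simp only [Prod.mk.injEq]
      constructor <;> apply Subtype.ext <;> simp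
  rw [Nat.card_congr E, Nat.card_prod]

/-- For a squarefree positive integer `d`, the number of triples
`(a, b, c) ∈ (ℤ/dℤ)³` with `a·c = b² + b` equals `d · ∏_{p ∣ d} (p + 1)`. -/
theorem count_solutions_mod_d (d : ℕ) (hd : 0 < d) (hsq : Squarefree d) :
    Nat.card {v : ZMod d × ZMod d × ZMod d // v.1 * v.2.2 = v.2.1 ^ 2 + v.2.1}
      = d * ∏ p ∈ d.primeFactors, (p + 1) := by
  induction d using Nat.strong_induction_on with
  | _ d ih =>
    rcases eq_or_lt_of_le (Nat.succ_le_of_lt hd) with h1 | h2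
    · -- d = 1
      have hd1 : d = 1 := h1.symm
      subst hd1
      haveI : Unique {v : ZMod 1 × ZMod 1 × ZMod 1 // v.1 * v.2.2 = v.2.1 ^ 2 + v.2.1} :=
        ⟨⟨⟨(0, 0, 0), by simp⟩⟩, fun a => Subtype.ext (Subsingleton.elim _ _)⟩
      rw [Nat.card_unique]
      simp
    · -- d ≥ 2
      have hne1 : d ≠ 1 := by omega
      set p := d.minFac with hpdef
      have hp : p.Prime := Nat.minFac_prime hne1
      have hpd : p ∣ d := Nat.minFac_dvd d
      obtain ⟨m, hdm⟩ := hpd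
      have hm0 : 0 < m := by
        rcases Nat.eq_zero_or_pos m with h | h
        · rw [h, mul_zero] at hdm; omega
        · exact h
      have hmlt : m < d := by
        have := hp.two_le
        calc m = 1 * m := (one_mul m).symm
          _ < p * m := Nat.mul_lt_mul_of_pos_right (by omega) hm0
          _ = d := hdm.symm
      have hsqm : Squarefree m := hsq.squarefree_of_dvd ⟨p, by rw [hdm]; ring⟩
      have hpm : ¬ p ∣ m := by
        intro hdvd
        obtain ⟨k, hk⟩ := hdvd
        have : p * p ∣ d := ⟨k, by rw [hdm, hk]; ring⟩
        have := hsq p this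
        rw [Nat.isUnit_iff] at this
        exact hp.one_lt.ne' this
      have hcop : Nat.Coprime p m := (Nat.Prime.coprime_iff_not_dvd hp).mpr hpm
      rw [hdm]
      rw [count_solutions_mul p m (hp.pos) hm0 hcop]
      rw [count_solutions_prime p hp, ih m hmlt hm0 hsqm]
      rw [Nat.primeFactors_mul (hp.pos.ne') (hm0.ne'), hp.primeFactors]
      rw [Finset.prod_union (by simpa [hp.primeFactors] using hcop.disjoint_primeFactors)]
      rw [Finset.prod_singleton]
      ring
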